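/- Consider two arms with K=1, where arm 1 has constant expected reward R_1(d) = r for all d ≥ 1, and arm 2 has R_2(d) = 1 if d = 1 and R_2(d) = R if d > 1, with 0 < r < 1 < R. The greedy policy (always pulling the arm with highest current expected reward) pulls arm 2 every period and collects total reward T over horizon T, while the alternating policy (pulling arms 1 and 2 in turn) collects at least ((R+r)/2)·(T-1). Consequently, the ratio of greedy's reward to the optimum tends to 0 as R → ∞. -/

import Mathlib

/-- The last time strictly before `t` (and ≥ 1) at which policy `π` pulled arm `b`;
`0` if there is no such time. -/
def prevPull (π : ℕ → Bool) (b : Bool) : ℕ → ℕ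
  | 0 => 0
  | t + 1 => if 1 ≤ t ∧ π t = b then t else prevPull π b t

/-- Total reward over horizon `T` of the two-arm policy `π` (`false` = arm 1 with
recovery function `f`, `true` = arm 2 with recovery function `g`): at each time
`t ∈ [1,T]` the pulled arm yields its recovery function evaluated at the idle time. -/
def totalReward (f g : ℕ → ℝ) (π : ℕ → Bool) (T : ℕ) : ℝ :=
  ∑ t ∈ Finset.Icc 1 T,
    (if π t then g (t - prevPull π true t) else f (t - prevPull π false t))

/-- With `R_1(d) = r < 1` and `R_2(1) = 1`, `R_2(d) = R` for `d ≥ 2`, the greedy policy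
(always pulling arm 2) collects exactly `T`, the alternating policy collects at least
`((R+r)/2)(T-1)`, and the ratio of greedy to alternating tends to 0 as `R → ∞`. -/
lemma prevPull_le (π : ℕ → Bool) (b : Bool) : ∀ t, prevPull π b t ≤ t - 1
  | 0 => le_refl 0
  | t + 1 => by
    simp only [prevPull]
    split
    · omega
    · have := prevPull_le π b t
      omega

lemma greedyPrev (t : ℕ) (h : 1 ≤ t) :
    t - prevPull (fun _ => true) true t = 1 := by
  rcases t with _ | _ | s
  · omega
  · simp [prevPull]
  · simp [prevPull]

lemma altPrev (t : ℕ) (h2 : 2 ≤ t) (he : t % 2 = 0) :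
    prevPull (fun s => decide (s % 2 = 0)) true t = t - 2 := by
  obtain ⟨u, rfl⟩ : ∃ u, t = u + 2 := ⟨t - 2, by omega⟩
  have hu : u % 2 = 0 := by omega
  have h1 : (u + 1) % 2 = 1 := by omega
  rcases Nat.eq_zero_or_pos u with rfl | hpos
  · simp [prevPull]
  · simp [prevPull, hu, h1, hpos, Nat.one_le_iff_ne_zero]
    omega

lemma altSum (R r : ℝ) (T : ℕ) :
    ∑ t ∈ Finset.Icc 1 T, (if t % 2 = 0 then R else r)
      = R * (T / 2 : ℕ) + r * ((T + 1) / 2 : ℕ) := by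
  induction T with
  | zero => simp
  | succ n ih =>
    rw [Finset.sum_Icc_succ_top (by omega), ih]
    rcases Nat.even_or_odd (n + 1) with h | h
    · have he : (n + 1) % 2 = 0 := Nat.even_iff.mp h
      have e1 : (n + 1) / 2 = n / 2 + 1 := by omega
      have e2 : (n + 2) / 2 = (n + 1) / 2 := by omega
      rw [if_pos he, e1, e2, e1]
      push_cast
      ring
    · have he : (n + 1) % 2 = 1 := Nat.odd_iff.mp h
      have e1 : (n + 1) / 2 = n / 2 := by omega
      have e2 : (n + 2) / 2 = (n + 1) / 2 + 1 := by omega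
      rw [if_neg (by omega), e1, e2, e1]
      push_cast
      ring

theorem stmt6 (r : ℝ) (hr : 0 < r) (hr1 : r < 1)
    (f : ℕ → ℝ) (g : ℝ → ℕ → ℝ)
    (hf : ∀ d, 1 ≤ d → f d = r)
    (hg1 : ∀ R : ℝ, g R 1 = 1) (hg : ∀ R : ℝ, ∀ d, 2 ≤ d → g R d = R) :
    (∀ R : ℝ, 1 < R → ∀ T : ℕ, totalReward f (g R) (fun _ => true) T = T) ∧
    (∀ R : ℝ, 1 < R → ∀ T : ℕ, 1 ≤ T →
      ((R + r) / 2) * ((T : ℝ) - 1) ≤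
        totalReward f (g R) (fun t => decide (t % 2 = 0)) T) ∧
    (∀ T : ℕ, 2 ≤ T → ∀ ε : ℝ, 0 < ε → ∃ R₀ : ℝ, 1 < R₀ ∧ ∀ R : ℝ, R₀ ≤ R →
      totalReward f (g R) (fun _ => true) T ≤
        ε * totalReward f (g R) (fun t => decide (t % 2 = 0)) T) := by
  have hgreedy : ∀ R : ℝ, ∀ T : ℕ, totalReward f (g R) (fun _ => true) T = T := by
    intro R T
    unfold totalReward
    have h1 : ∀ t ∈ Finset.Icc 1 T,
        (if (fun _ => true) t then g R (t - prevPull (fun _ => true) true t)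
          else f (t - prevPull (fun _ => true) false t)) = 1 := by
      intro t ht
      simp only [if_true]
      rw [greedyPrev t (Finset.mem_Icc.mp ht).1, hg1]
    rw [Finset.sum_congr rfl h1, Finset.sum_const, Nat.card_Icc]
    simp
  have haltval : ∀ R : ℝ, ∀ T : ℕ,
      totalReward f (g R) (fun t => decide (t % 2 = 0)) T
        = R * (T / 2 : ℕ) + r * ((T + 1) / 2 : ℕ) := by
    intro R T
    unfold totalReward
    rw [← altSum R r T]
    refine Finset.sum_congr rfl (fun t ht => ?_)
    obtain ⟨ht1, _⟩ := Finset.mem_Icc.mp ht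
    by_cases he : t % 2 = 0
    · rw [if_pos he, if_pos (by simp [he])]
      have h2 : 2 ≤ t := by omega
      rw [altPrev t h2 he, hg R _ (by omega)]
    · rw [if_neg he, if_neg (by simp [he])]
      have := prevPull_le (fun t => decide (t % 2 = 0)) false t
      rw [hf _ (by omega)]
  have haltge : ∀ R : ℝ, 1 < R → ∀ T : ℕ, 1 ≤ T →
      ((R + r) / 2) * ((T : ℝ) - 1) ≤
        totalReward f (g R) (fun t => decide (t % 2 = 0)) T := by
    intro R hR T hT
    rw [haltval R T]
    have h1 : (T : ℝ) ≤ 2 * ((T / 2 : ℕ) : ℝ) + 1 := by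
      exact_mod_cast (show T ≤ 2 * (T / 2) + 1 by omega)
    have h2 : (T : ℝ) ≤ 2 * (((T + 1) / 2 : ℕ) : ℝ) := by
      exact_mod_cast (show T ≤ 2 * ((T + 1) / 2) by omega)
    nlinarith [hr.le, hR.le]
  refine ⟨fun R _ T => hgreedy R T, haltge, ?_⟩
  intro T hT ε hε
  refine ⟨max 2 (2 * T / ε), lt_of_lt_of_le one_lt_two (le_max_left _ _), fun R hR => ?_⟩
  have hR2 : 2 ≤ R := le_trans (le_max_left _ _) hR
  have hRT : 2 * T / ε ≤ R := le_trans (le_max_right _ _) hR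
  have hR1 : (1 : ℝ) < R := by linarith
  have halt := haltge R hR1 T (by omega)
  rw [hgreedy R T]
  have hT1 : (1 : ℝ) ≤ (T : ℝ) - 1 := by
    have : (2 : ℝ) ≤ T := by exact_mod_cast hT
    linarith
  have key : (T : ℝ) ≤ ε * (((R + r) / 2) * ((T : ℝ) - 1)) := by
    have h3 : 2 * (T : ℝ) ≤ ε * R := by
      rw [div_le_iff₀ hε] at hRT
      linarith
    have h4 : (T : ℝ) ≤ ε * ((R + r) / 2) := by nlinarith
    have h5 : ε * ((R + r) / 2) * 1 ≤ ε * ((R + r) / 2) * ((T : ℝ) - 1) := by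
      apply mul_le_mul_of_nonneg_left hT1
      positivity
    nlinarith
  calc (T : ℝ) ≤ ε * (((R + r) / 2) * ((T : ℝ) - 1)) := key
    _ ≤ ε * totalReward f (g R) (fun t => decide (t % 2 = 0)) T := by
        exact mul_le_mul_of_nonneg_left halt hε.le
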